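/- Let $L$ be a field in which $2 \neq 0$, let $a, b \in L$ satisfy $a^2 = 2$ and $b^2 = -1$, and let $\sigma, \tau$ be ring automorphisms of $L$ with $\sigma(a) = -a$, $\sigma(b) = b$, $\tau(a) = a$, $\tau(b) = -b$. With $P = \begin{pmatrix} -a & -a \\ -1 & 1\end{pmatrix}$, $Q = \begin{pmatrix} -1-b & 1-b \\ -1 & 1\end{pmatrix}$, $A = \begin{pmatrix} 2 & 0 \\ 0 & 1 \end{pmatrix}$, let $\Gamma$ be the subgroup of $PGL_2(L) = GL_2(L)/\mathrm{center}$ generated by the classes of $\gamma_1 = P A P^{-1}$ and $\gamma_2 = Q A Q^{-1}$. Then the group automorphisms of $PGL_2(L)$ induced by applying $\sigma$ (respectively $\tau$) to all matrix entries map $\Gamma$ onto $\Gamma$. -/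

import Mathlib

private theorem closure_pair_aux {G : Type*} [Group G] {x y x' y' : G}
    (hx : x' = x ∨ x' = x⁻¹) (hy : y' = y ∨ y' = y⁻¹) :
    Subgroup.closure {x', y'} = Subgroup.closure {x, y} := by
  have mem : ∀ {z w : G}, (z = w ∨ z = w⁻¹) → ∀ S : Set G, w ∈ S → z ∈ Subgroup.closure S := by
    rintro z w (rfl | rfl) S hw
    · exact Subgroup.subset_closure hw
    · exact inv_mem (Subgroup.subset_closure hw)
  have hx' : x = x' ∨ x = x'⁻¹ := by rcases hx with rfl | rfl; exacts [Or.inl rfl, Or.inr (inv_inv x).symm]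
  have hy' : y = y' ∨ y = y'⁻¹ := by rcases hy with rfl | rfl; exacts [Or.inl rfl, Or.inr (inv_inv y).symm]
  apply le_antisymm <;> rw [Subgroup.closure_le] <;> rintro z hz <;>
    simp only [Set.mem_insert_iff, Set.mem_singleton_iff] at hz <;> rcases hz with rfl | rfl
  · exact mem hx _ (by simp)
  · exact mem hy _ (by simp)
  · exact mem hx' _ (by simp)
  · exact mem hy' _ (by simp)


set_option maxHeartbeats 1000000 in
/-- With `a² = 2`, `b² = -1` and Galois automorphisms `σ, τ`
(`σ a = -a`, `σ b = b`, `τ a = a`, `τ b = -b`), let `Γ` be the subgroup of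
`PGL₂(L) = GL₂(L)/center` generated by the classes of `γ₁ = P A P⁻¹` and
`γ₂ = Q A Q⁻¹`. Then the automorphisms of `PGL₂(L)` induced by applying `σ`
(resp. `τ`) entrywise map `Γ` onto `Γ`. -/
theorem schottky_group_galois_stable {L : Type*} [Field L]
    (h2 : (2 : L) ≠ 0) (a b : L) (ha : a ^ 2 = 2) (hb : b ^ 2 = -1)
    (σ τ : L ≃+* L) (hσa : σ a = -a) (hσb : σ b = b) (hτa : τ a = a) (hτb : τ b = -b)
    (g₁ g₂ : (Matrix (Fin 2) (Fin 2) L)ˣ)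
    (hg₁ : (g₁ : Matrix (Fin 2) (Fin 2) L) =
      !![-a, -a; -1, 1] * !![2, 0; 0, 1] * !![-a, -a; -1, 1]⁻¹)
    (hg₂ : (g₂ : Matrix (Fin 2) (Fin 2) L) =
      !![-1 - b, 1 - b; -1, 1] * !![2, 0; 0, 1] * !![-1 - b, 1 - b; -1, 1]⁻¹) :
    ∀ ρ : L ≃+* L, (ρ = σ ∨ ρ = τ) →
      Subgroup.map
        ((QuotientGroup.mk' (Subgroup.center (Matrix (Fin 2) (Fin 2) L)ˣ)).comp
          (Units.map ρ.toRingHom.mapMatrix.toMonoidHom))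
        (Subgroup.closure {g₁, g₂})
      = Subgroup.map (QuotientGroup.mk' (Subgroup.center (Matrix (Fin 2) (Fin 2) L)ˣ))
          (Subgroup.closure {g₁, g₂}) := by
  have ha0 : a ≠ 0 := by rintro rfl; simp at ha; exact h2 ha.symm
  have hb0 : b ≠ 0 := by
    rintro rfl
    exact h2 (by linear_combination 2*hb)
  have h4 : (4 : L) ≠ 0 := by
    intro h; apply h2
    exact (mul_eq_zero.mp (show (2:L)*2 = 0 by linear_combination h)).resolve_left h2
  -- explicit forms
  have hM1 : (g₁ : Matrix (Fin 2) (Fin 2) L) = (4⁻¹ : L) • !![6, 2*a; a, 6] := by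
    have hdet : IsUnit (!![-a, -a; -1, 1] : Matrix (Fin 2) (Fin 2) L).det := by
      rw [Matrix.det_fin_two_of]
      apply isUnit_iff_ne_zero.mpr; intro h
      exact ha0 ((mul_eq_zero.mp (show (2:L)*a = 0 by linear_combination -h)).resolve_left h2)
    have hPA : (!![-a, -a; -1, 1] : Matrix (Fin 2) (Fin 2) L) * !![2, 0; 0, 1]
        = ((4⁻¹ : L) • !![6, 2*a; a, 6]) * !![-a, -a; -1, 1] := by
      ext i j
      fin_cases i <;> fin_cases j <;>
        simp [Matrix.mul_apply, Fin.sum_univ_two, Matrix.smul_apply, smul_eq_mul] <;>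
        field_simp <;>
        first
          | ring1
          | (ring_nf; rw [ha]; ring_nf)
          | (ring_nf; rw [ha]; norm_num)
    rw [hg₁, hPA, mul_assoc, Matrix.mul_nonsing_inv _ hdet, mul_one]
  have hM2 : (g₂ : Matrix (Fin 2) (Fin 2) L) = (2⁻¹ : L) • !![3 - b, 2*b; -b, 3 + b] := by
    have hdet : IsUnit (!![-1 - b, 1 - b; -1, 1] : Matrix (Fin 2) (Fin 2) L).det := by
      rw [Matrix.det_fin_two_of]
      apply isUnit_iff_ne_zero.mpr; intro h
      exact hb0 ((mul_eq_zero.mp (show (2:L)*b = 0 by linear_combination -h)).resolve_left h2)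
    have hQA : (!![-1 - b, 1 - b; -1, 1] : Matrix (Fin 2) (Fin 2) L) * !![2, 0; 0, 1]
        = ((2⁻¹ : L) • !![3 - b, 2*b; -b, 3 + b]) * !![-1 - b, 1 - b; -1, 1] := by
      ext i j
      fin_cases i <;> fin_cases j <;>
        simp [Matrix.mul_apply, Fin.sum_univ_two, Matrix.smul_apply, smul_eq_mul] <;>
        field_simp <;>
        first
          | ring1
          | (ring_nf; rw [hb]; ring_nf)
          | (ring_nf; rw [hb]; norm_num)
    rw [hg₂, hQA, mul_assoc, Matrix.mul_nonsing_inv _ hdet, mul_one]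
  -- the central unit 2•1
  have hval : ((2:L) • (1 : Matrix (Fin 2) (Fin 2) L)) * ((2⁻¹:L) • 1) = 1 := by
    rw [smul_mul_assoc, one_mul, smul_smul, mul_inv_cancel₀ h2, one_smul]
  have hval' : ((2⁻¹:L) • (1 : Matrix (Fin 2) (Fin 2) L)) * ((2:L) • 1) = 1 := by
    rw [smul_mul_assoc, one_mul, smul_smul, inv_mul_cancel₀ h2, one_smul]
  set u : (Matrix (Fin 2) (Fin 2) L)ˣ := ⟨(2:L) • 1, (2⁻¹:L) • 1, hval, hval'⟩ with hu_def
  have hu : u ∈ Subgroup.center (Matrix (Fin 2) (Fin 2) L)ˣ := by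
    rw [Subgroup.mem_center_iff]
    intro g
    apply Units.ext
    simp only [Units.val_mul, hu_def]
    show (↑g : Matrix (Fin 2) (Fin 2) L) * ((2:L) • 1) = ((2:L) • 1) * (↑g : Matrix (Fin 2) (Fin 2) L)
    rw [mul_smul_comm, smul_mul_assoc, mul_one, one_mul]
  -- key step
  have key : ∀ (ρ : L ≃+* L) (x : (Matrix (Fin 2) (Fin 2) L)ˣ),
      ((x : Matrix (Fin 2) (Fin 2) L).map ρ) * (x : Matrix (Fin 2) (Fin 2) L)
        = (2:L) • (1 : Matrix (Fin 2) (Fin 2) L) →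
      (QuotientGroup.mk' (Subgroup.center (Matrix (Fin 2) (Fin 2) L)ˣ))
          (Units.map ρ.toRingHom.mapMatrix.toMonoidHom x)
        = ((QuotientGroup.mk' (Subgroup.center (Matrix (Fin 2) (Fin 2) L)ˣ)) x)⁻¹ := by
    intro ρ x hx
    have hx' : Units.map ρ.toRingHom.mapMatrix.toMonoidHom x = u * x⁻¹ := by
      apply Units.ext
      simp only [Units.val_mul, Units.coe_map, RingHom.toMonoidHom_eq_coe, MonoidHom.coe_coe,
        RingHom.mapMatrix_apply, RingEquiv.toRingHom_eq_coe, RingHom.coe_coe]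
      have h1 : (x : Matrix (Fin 2) (Fin 2) L) * ((x⁻¹ : (Matrix (Fin 2) (Fin 2) L)ˣ) :
          Matrix (Fin 2) (Fin 2) L) = 1 := x.mul_inv
      calc (↑x : Matrix (Fin 2) (Fin 2) L).map ⇑ρ
          = ((↑x : Matrix (Fin 2) (Fin 2) L).map ⇑ρ)
              * ((↑x : Matrix (Fin 2) (Fin 2) L)
                * ((x⁻¹ : (Matrix (Fin 2) (Fin 2) L)ˣ) : Matrix (Fin 2) (Fin 2) L)) := by
            rw [h1, mul_one]
        _ = ((2:L) • 1) * ((x⁻¹ : (Matrix (Fin 2) (Fin 2) L)ˣ) : Matrix (Fin 2) (Fin 2) L) := by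
            rw [← mul_assoc, hx]
        _ = ↑u * ((x⁻¹ : (Matrix (Fin 2) (Fin 2) L)ˣ) : Matrix (Fin 2) (Fin 2) L) := rfl
    have hu1 : (QuotientGroup.mk' (Subgroup.center (Matrix (Fin 2) (Fin 2) L)ˣ)) u = 1 :=
      (QuotientGroup.eq_one_iff u).mpr hu
    rw [hx', map_mul, map_inv, hu1, one_mul]
  -- product computations
  have k1 : ((g₁ : Matrix (Fin 2) (Fin 2) L).map σ) * (g₁ : Matrix (Fin 2) (Fin 2) L)
      = (2:L) • (1 : Matrix (Fin 2) (Fin 2) L) := by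
    rw [hM1]
    ext i j
    fin_cases i <;> fin_cases j <;>
      simp [Matrix.mul_apply, Fin.sum_univ_two, Matrix.map_apply, Matrix.smul_apply,
        smul_eq_mul, Matrix.one_apply, hσa, hσb, map_inv₀, map_ofNat, map_mul, map_neg,
        map_add, map_sub, map_one] <;>
      field_simp <;>
      first
        | ring1
        | (ring_nf; rw [ha]; ring_nf)
        | (ring_nf; rw [ha]; norm_num)
  have k2 : ((g₂ : Matrix (Fin 2) (Fin 2) L).map τ) * (g₂ : Matrix (Fin 2) (Fin 2) L)
      = (2:L) • (1 : Matrix (Fin 2) (Fin 2) L) := by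
    rw [hM2]
    ext i j
    fin_cases i <;> fin_cases j <;>
      simp [Matrix.mul_apply, Fin.sum_univ_two, Matrix.map_apply, Matrix.smul_apply,
        smul_eq_mul, Matrix.one_apply, hτa, hτb, map_inv₀, map_ofNat, map_mul, map_neg,
        map_add, map_sub, map_one] <;>
      field_simp <;>
      first
        | ring1
        | (ring_nf; rw [hb]; ring_nf)
        | (ring_nf; rw [hb]; norm_num)
  -- fixed generators
  have f2σ : Units.map σ.toRingHom.mapMatrix.toMonoidHom g₂ = g₂ := by
    apply Units.ext
    simp only [Units.coe_map, RingHom.toMonoidHom_eq_coe, MonoidHom.coe_coe,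
      RingHom.mapMatrix_apply, RingEquiv.toRingHom_eq_coe, RingHom.coe_coe]
    rw [hM2]
    ext i j
    fin_cases i <;> fin_cases j <;>
      simp [Matrix.map_apply, Matrix.smul_apply, smul_eq_mul, hσb, map_inv₀, map_ofNat,
        map_mul, map_neg, map_add, map_sub, map_one]
  have f1τ : Units.map τ.toRingHom.mapMatrix.toMonoidHom g₁ = g₁ := by
    apply Units.ext
    simp only [Units.coe_map, RingHom.toMonoidHom_eq_coe, MonoidHom.coe_coe,
      RingHom.mapMatrix_apply, RingEquiv.toRingHom_eq_coe, RingHom.coe_coe]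
    rw [hM1]
    ext i j
    fin_cases i <;> fin_cases j <;>
      simp [Matrix.map_apply, Matrix.smul_apply, smul_eq_mul, hτa, map_inv₀, map_ofNat,
        map_mul, map_neg, map_add, map_sub, map_one]
  intro ρ hρ
  rw [MonoidHom.map_closure, MonoidHom.map_closure, Set.image_pair, Set.image_pair]
  rcases hρ with rfl | rfl
  · refine closure_pair_aux (Or.inr ?_) (Or.inl ?_)
    · exact key ρ g₁ k1
    · simp only [MonoidHom.comp_apply, f2σ]
  · refine closure_pair_aux (Or.inl ?_) (Or.inr ?_)
    · simp only [MonoidHom.comp_apply, f1τ]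
    · exact key ρ g₂ k2
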